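/- The number of r-plane trees on k+1 vertices equals (r/(k+1)) · binom((r+1)k, k) for all k ≥ 0. -/

import Mathlib

def cellMem (L : ℕ → ℕ) (i j : ℕ) : Prop := 1 ≤ i ∧ 1 ≤ j ∧ j ≤ L i

def IsPartitionOfLength (L : ℕ → ℕ) (l : ℕ) : Prop :=
  (∀ i j, 1 ≤ i → i ≤ j → L j ≤ L i) ∧ ∀ i, 1 ≤ i → (1 ≤ L i ↔ i ≤ l)

def SelfConjugate (L : ℕ → ℕ) : Prop := ∀ i j, cellMem L i j ↔ cellMem L j i

inductive LTree where
  | node : ℕ → List LTree → LTree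

namespace LTree

def label : LTree → ℕ
  | node a _ => a

def size : LTree → ℕ
  | node _ ts => 1 + (ts.attach.map (fun t => size t.1)).sum
decreasing_by
  have := List.sizeOf_lt_of_mem t.2
  simp only [node.sizeOf_spec]
  omega

def countLabel (i : ℕ) : LTree → ℕ
  | node a ts => (if a = i then 1 else 0) + (ts.attach.map (fun t => countLabel i t.1)).sum
decreasing_by
  have := List.sizeOf_lt_of_mem t.2
  simp only [node.sizeOf_spec]
  omega

def Valid (P : ℕ → ℕ → Prop) : LTree → Prop
  | node a ts => ∀ t ∈ ts, P a t.label ∧ Valid P t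
decreasing_by
  have := List.sizeOf_lt_of_mem ‹_ ∈ _›
  simp only [node.sizeOf_spec]
  omega

def LabelsLe (l : ℕ) : LTree → Prop
  | node a ts => (1 ≤ a ∧ a ≤ l) ∧ ∀ t ∈ ts, LabelsLe l t
decreasing_by
  have := List.sizeOf_lt_of_mem ‹_ ∈ _›
  simp only [node.sizeOf_spec]
  omega

end LTree

/-- A `λ`-plane tree: labels in `[1, l]` and every edge `{u, v}` satisfies
`(c u, c v) ∈ λ`. -/
def IsLambdaPlaneTree (L : ℕ → ℕ) (l : ℕ) (t : LTree) : Prop :=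
  LTree.LabelsLe l t ∧ LTree.Valid (fun u v => cellMem L u v) t

/-- An `r`-plane tree: labels in `[1, r]` and every edge `{u, v}` satisfies
`c u + c v ≤ r + 1`. -/
def IsRPlaneTree (r : ℕ) (t : LTree) : Prop :=
  LTree.LabelsLe r t ∧ LTree.Valid (fun u v => u + v ≤ r + 1) t

/-- `C_k^λ`: the number of `λ`-plane trees on `k + 1` vertices. -/
noncomputable def lambdaPlaneCount (L : ℕ → ℕ) (l k : ℕ) : ℕ :=
  Nat.card {t : LTree // t.size = k + 1 ∧ IsLambdaPlaneTree L l t}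

/-- The number of `r`-plane trees on `k + 1` vertices. -/
noncomputable def rPlaneCount (r k : ℕ) : ℕ :=
  Nat.card {t : LTree // t.size = k + 1 ∧ IsRPlaneTree r t}


namespace GPW

open LTree Finset

lemma size_node (a : ℕ) (ts : List LTree) :
    (LTree.node a ts).size = 1 + (ts.map LTree.size).sum := by
  rw [LTree.size]; congr 1; rw [List.attach_map_val]

lemma size_pos (t : LTree) : 1 ≤ t.size := by
  cases t with
  | node a ts => rw [size_node]; omega

lemma isR_node {r a : ℕ} {ts : List LTree} :
    IsRPlaneTree r (LTree.node a ts) ↔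
      ((1 ≤ a ∧ a ≤ r) ∧ ∀ t ∈ ts, IsRPlaneTree r t ∧ a + t.label ≤ r + 1) := by
  rw [IsRPlaneTree, LTree.LabelsLe, LTree.Valid]
  constructor
  · rintro ⟨⟨h1, h2⟩, h3⟩
    exact ⟨h1, fun t ht => ⟨⟨h2 t ht, (h3 t ht).2⟩, (h3 t ht).1⟩⟩
  · rintro ⟨h1, h2⟩
    exact ⟨⟨h1, fun t ht => (h2 t ht).1.1⟩, fun t ht => ⟨(h2 t ht).2, (h2 t ht).1.2⟩⟩

/-- Forests of r-plane trees, total size `n`, root labels `≤ m`. -/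
def Forest (r m n : ℕ) : Type :=
  {ts : List LTree // (ts.map LTree.size).sum = n ∧
    ∀ t ∈ ts, IsRPlaneTree r t ∧ t.label ≤ m}

instance uniqueForestZero (r m : ℕ) : Unique (Forest r m 0) where
  default := ⟨[], by simp⟩
  uniq := by
    rintro ⟨ts, h1, h2⟩
    cases ts with
    | nil => rfl
    | cons t ts =>
      exfalso
      simp only [List.map_cons, List.sum_cons] at h1
      have := size_pos t
      omega

def SigF (r m n : ℕ) : Type :=
  Σ a : Fin (min m r), Σ j : Fin (n+1), Forest r (r - a.1) j.1 × Forest r m (n - j.1)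

def consF (r m n : ℕ) (x : SigF r m n) : Forest r m (n+1) :=
  ⟨LTree.node (x.1.1 + 1) x.2.2.1.1 :: x.2.2.2.1, by
    obtain ⟨⟨a, ha⟩, ⟨j, hj⟩, ⟨cs, hc1, hc2⟩, ⟨rest, hr1, hr2⟩⟩ := x
    simp only at hc1 hc2 hr1 hr2 ⊢
    have ham : a < m := lt_of_lt_of_le ha (min_le_left _ _)
    have har : a < r := lt_of_lt_of_le ha (min_le_right _ _)
    refine ⟨?_, ?_⟩
    · simp only [List.map_cons, List.sum_cons, size_node, hc1, hr1]
      omega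
    · intro t ht
      rcases List.mem_cons.1 ht with h | h
      · subst h
        refine ⟨isR_node.2 ⟨⟨by omega, by omega⟩, fun c hc => ⟨(hc2 c hc).1, ?_⟩⟩, ?_⟩
        · have := (hc2 c hc).2; omega
        · show a + 1 ≤ m; omega
      · exact hr2 t h⟩

lemma consF_bijective (r m n : ℕ) : Function.Bijective (consF r m n) := by
  constructor
  · rintro ⟨⟨a, ha⟩, ⟨j, hj⟩, ⟨cs, hc1, hc2⟩, ⟨rest, hr1, hr2⟩⟩
      ⟨⟨a2, ha2⟩, ⟨j2, hj2⟩, ⟨cs2, hc12, hc22⟩, ⟨rest2, hr12, hr22⟩⟩ h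
    replace h := congrArg Subtype.val h
    simp only [consF, List.cons.injEq, LTree.node.injEq] at h
    obtain ⟨⟨haa, hcc⟩, hrr⟩ := h
    have haa2 : a = a2 := by omega
    subst haa2; subst hcc; subst hrr
    simp only at hc1 hc12
    have hjj : j = j2 := by omega
    subst hjj
    rfl
  · rintro ⟨ts, hsum, hall⟩
    cases ts with
    | nil => simp at hsum
    | cons t rest =>
      cases t with
      | node b cs =>
        simp only [List.map_cons, List.sum_cons, size_node] at hsum
        have hhd := hall _ List.mem_cons_self
        rw [isR_node] at hhd
        obtain ⟨⟨⟨hb1, hb2⟩, hcs⟩, hbm⟩ := hhd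
        simp only [LTree.label] at hbm
        have hjle : (cs.map LTree.size).sum ≤ n := by omega
        have hrb : r - (b - 1) = r + 1 - b := by omega
        refine ⟨⟨⟨b - 1, by omega⟩, ⟨(cs.map LTree.size).sum, by omega⟩,
          ⟨cs, rfl, fun c hc => ⟨(hcs c hc).1, ?_⟩⟩,
          ⟨rest, by simp only [Fin.val_mk]; omega,
            fun t ht => hall t (List.mem_cons_of_mem _ ht)⟩⟩, ?_⟩
        · simp only [Fin.val_mk, hrb]
          have := (hcs c hc).2; omega
        · apply Subtype.ext
          simp only [consF]
          congr 2
          omega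
lemma forest_finite (r : ℕ) : ∀ n m, Finite (Forest r m n) := by
  intro n
  induction n using Nat.strong_induction_on with
  | _ n IH =>
    intro m
    cases n with
    | zero => infer_instance
    | succ n =>
      have : ∀ a : Fin (min m r), ∀ j : Fin (n+1),
          Finite (Forest r (r - a.1) j.1 × Forest r m (n - j.1)) := by
        intro a j
        have h1 : Finite (Forest r (r - a.1) j.1) := IH j.1 (by omega) _
        have h2 : Finite (Forest r m (n - j.1)) := IH (n - j.1) (by omega) _
        exact Finite.instProd
      have : Finite (SigF r m n) := by
        unfold SigF
        have : ∀ a : Fin (min m r), Finite (Σ j : Fin (n+1),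
            Forest r (r - a.1) j.1 × Forest r m (n - j.1)) := fun a => Finite.instSigma
        exact Finite.instSigma
      exact Finite.of_surjective _ (consF_bijective r m n).2

def Fnum (r : ℕ) : ℕ → ℕ → ℕ
  | _, 0 => 1
  | m, n+1 => ∑ a ∈ Finset.range (min m r), ∑ j ∈ Finset.range (n+1),
      Fnum r (r - a) (min j n) * Fnum r m (n - j)
termination_by m n => n
decreasing_by
  · omega
  · omega

lemma natCard_sigma {ι : Type*} [Fintype ι] (f : ι → Type*) [∀ i, Finite (f i)] :
    Nat.card (Σ i, f i) = ∑ i, Nat.card (f i) := by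
  letI : ∀ i, Fintype (f i) := fun i => Fintype.ofFinite _
  simp [Nat.card_eq_fintype_card]

lemma card_forest (r : ℕ) : ∀ n m, Nat.card (Forest r m n) = Fnum r m n := by
  intro n
  induction n using Nat.strong_induction_on with
  | _ n IH =>
    intro m
    cases n with
    | zero => rw [Nat.card_unique, Fnum]
    | succ n =>
      rw [← Nat.card_eq_of_bijective _ (consF_bijective r m n)]
      haveI : ∀ (m' n' : ℕ), Finite (Forest r m' n') := fun m' n' => forest_finite r n' m'
      rw [show SigF r m n = (Σ a : Fin (min m r), Σ j : Fin (n+1),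
        Forest r (r - a.1) j.1 × Forest r m (n - j.1)) from rfl]
      rw [natCard_sigma]
      rw [Fnum]
      rw [Fin.sum_univ_eq_sum_range
        (fun a => Nat.card (Σ j : Fin (n+1), Forest r (r - a) j.1 × Forest r m (n - j.1)))]
      refine Finset.sum_congr rfl fun a ha => ?_
      rw [natCard_sigma]
      rw [Fin.sum_univ_eq_sum_range
        (fun j => Nat.card (Forest r (r - a) j × Forest r m (n - j)))]
      refine Finset.sum_congr rfl fun j hj => ?_
      rw [Finset.mem_range] at hj
      rw [Nat.card_prod, IH j (by omega) _, IH (n - j) (by omega) _,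
        show min j n = j by omega]

def treeF (r k : ℕ) (x : Σ a : Fin r, Forest r (r - a.1) k) :
    {t : LTree // t.size = k + 1 ∧ IsRPlaneTree r t} :=
  ⟨LTree.node (x.1.1 + 1) x.2.1, by
    obtain ⟨⟨a, ha⟩, ⟨cs, hc1, hc2⟩⟩ := x
    simp only at hc1 hc2 ⊢
    constructor
    · rw [size_node, hc1]; omega
    · refine isR_node.2 ⟨⟨by omega, by omega⟩, fun c hc => ⟨(hc2 c hc).1, ?_⟩⟩
      have := (hc2 c hc).2; omega⟩

lemma treeF_bijective (r k : ℕ) : Function.Bijective (treeF r k) := by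
  constructor
  · rintro ⟨⟨a, ha⟩, ⟨cs, hc1, hc2⟩⟩ ⟨⟨a2, ha2⟩, ⟨cs2, hc12, hc22⟩⟩ h
    replace h := congrArg Subtype.val h
    simp only [treeF, LTree.node.injEq] at h
    obtain ⟨haa, hcc⟩ := h
    have haa2 : a = a2 := by omega
    subst haa2; subst hcc
    rfl
  · rintro ⟨t, hsz, hR⟩
    cases t with
    | node b cs =>
      rw [size_node] at hsz
      rw [isR_node] at hR
      obtain ⟨⟨hb1, hb2⟩, hcs⟩ := hR
      have hrb : r - (b - 1) = r + 1 - b := by omega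
      refine ⟨⟨⟨b - 1, by omega⟩,
        ⟨cs, by omega, fun c hc => ⟨(hcs c hc).1, ?_⟩⟩⟩, ?_⟩
      · simp only [Fin.val_mk, hrb]
        have := (hcs c hc).2; omega
      · apply Subtype.ext
        simp only [treeF]
        congr 1
        omega

lemma rPlaneCount_eq (r k : ℕ) :
    rPlaneCount r k = ∑ a ∈ Finset.range r, Fnum r (r - a) k := by
  haveI : ∀ (m' n' : ℕ), Finite (Forest r m' n') := fun m' n' => forest_finite r n' m'
  rw [rPlaneCount, ← Nat.card_eq_of_bijective _ (treeF_bijective r k), natCard_sigma,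
    Fin.sum_univ_eq_sum_range (fun a => Nat.card (Forest r (r - a) k))]
  exact Finset.sum_congr rfl fun a _ => card_forest r k _

end GPW

namespace GPW
open Finset

/-- Integer form of the Raney number `m/((r+1)n+m) * C((r+1)n+m, n)`. -/
def Rn (r : ℕ) : ℕ → ℕ → ℤ
  | _, 0 => 1
  | m, n+1 => (((r+1)*(n+1)+m).choose (n+1) : ℤ) - (r+1) * (((r+1)*n + r + m).choose n : ℤ)

lemma Rn_zero (r n : ℕ) : Rn r 0 (n+1) = 0 := by
  have h : ((r+1)*n+r+1) * (((r+1)*n+r).choose n) = (((r+1)*n+r+1).choose (n+1)) * (n+1) := by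
    simpa [Nat.succ_eq_add_one] using Nat.add_one_mul_choose_eq ((r+1)*n + r) n
  have e : (r+1)*(n+1)+0 = (r+1)*n+r+1 := by ring
  simp only [Rn, e, Nat.add_zero]
  have hne : ((n:ℤ)+1) ≠ 0 := by positivity
  have hcast : (((r+1)*n+r+1 : ℕ) : ℤ) * ((((r+1)*n+r).choose n : ℕ) : ℤ)
      = ((((r+1)*n+r+1).choose (n+1) : ℕ) : ℤ) * ((n:ℤ)+1) := by exact_mod_cast h
  have key : ((((r+1)*n+r+1).choose (n+1) : ℕ) : ℤ)
      = ((r:ℤ)+1) * ((((r+1)*n+r).choose n : ℕ) : ℤ) := by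
    apply mul_right_cancel₀ hne
    rw [← hcast]; push_cast; ring
  linear_combination key

lemma Rn_succ_succ (r m n : ℕ) :
    Rn r (m+1) (n+1) = Rn r m (n+1) + Rn r (m+r+1) n := by
  cases n with
  | zero =>
    simp only [Rn, Nat.mul_one, Nat.mul_zero, Nat.zero_add, Nat.choose_one_right,
      Nat.choose_zero_right]
    push_cast
    ring
  | succ n' =>
    simp only [Rn]
    have e1 : (r+1)*(n'+1+1)+(m+1) = ((r+1)*(n'+1+1)+m)+1 := by omega
    have e2 : (r+1)*(n'+1)+r+(m+1) = ((r+1)*(n'+1)+r+m)+1 := by omega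
    rw [e1, Nat.choose_succ_succ ((r+1)*(n'+1+1)+m) (n'+1),
      e2, Nat.choose_succ_succ ((r+1)*(n'+1)+r+m) n']
    have e3 : (r+1)*(n'+1)+(m+r+1) = (r+1)*(n'+1+1)+m := by ring
    have e4 : (r+1)*n'+r+(m+r+1) = (r+1)*(n'+1)+r+m := by ring
    rw [e3, e4]
    push_cast
    ring

lemma Rn_zero_left (r : ℕ) (j : ℕ) : Rn r 0 j = if j = 0 then 1 else 0 := by
  cases j with
  | zero => simp [Rn]
  | succ j' => simp [Rn_zero]

lemma Rn_conv (r : ℕ) : ∀ n a b, ∑ j ∈ range (n+1), Rn r a j * Rn r b (n-j) = Rn r (a+b) n := by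
  intro n
  induction n using Nat.strong_induction_on with
  | _ n IH =>
    intro a
    induction a with
    | zero =>
      intro b
      rw [Finset.sum_eq_single 0]
      · simp [Rn]
      · intro j _ hj
        rw [Rn_zero_left]
        simp [hj]
      · simp
    | succ a IHa =>
      intro b
      cases n with
      | zero => simp [Rn]
      | succ n' =>
        have hsplit : ∀ j ∈ range (n'+1+1), Rn r (a+1) j * Rn r b (n'+1-j) =
            Rn r a j * Rn r b (n'+1-j) +
              (if j = 0 then 0 else Rn r (a+r+1) (j-1) * Rn r b (n'+1-j)) := by
          intro j _
          cases j with
          | zero => simp [show ∀ m, Rn r m 0 = 1 from fun m => rfl]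
          | succ j'' =>
            rw [Rn_succ_succ]
            simp only [Nat.succ_ne_zero, if_false, Nat.add_sub_cancel]
            ring
        rw [Finset.sum_congr rfl hsplit, Finset.sum_add_distrib, IHa b]
        rw [Finset.sum_range_succ']
        simp only [if_pos rfl, Nat.succ_ne_zero, if_false, add_zero, if_true,
          Nat.add_sub_cancel, Nat.succ_sub_succ, Nat.sub_zero]
        rw [IH n' (by omega) (a+r+1) b]
        rw [show a+r+1+b = a+b+r+1 from by omega, ← Rn_succ_succ,
          show a+b+1 = a+1+b from by omega]

lemma Fnum_eq_Rn (r : ℕ) : ∀ n m, m ≤ r → (Fnum r m n : ℤ) = Rn r m n := by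
  intro n
  induction n using Nat.strong_induction_on with
  | _ n IH =>
    intro m hm
    cases n with
    | zero => simp [Fnum, Rn]
    | succ n =>
      rw [Fnum, min_eq_left hm]
      push_cast
      have h1 : ∀ a ∈ range m, ∑ j ∈ range (n+1),
          (Fnum r (r-a) (min j n) : ℤ) * (Fnum r m (n-j) : ℤ) = Rn r (r-a+m) n := by
        intro a ha
        rw [← Rn_conv r n (r-a) m]
        refine Finset.sum_congr rfl fun j hj => ?_
        rw [Finset.mem_range] at hj
        rw [show min j n = j from by omega, IH j (by omega) _ (by omega),
          IH (n-j) (by omega) _ hm]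
      rw [Finset.sum_congr rfl h1]
      have h2 : ∀ a ∈ range m, Rn r (r-a+m) n =
          Rn r (m-1-a+1) (n+1) - Rn r (m-1-a) (n+1) := by
        intro a ha
        rw [Finset.mem_range] at ha
        rw [Rn_succ_succ r (m-1-a) n, show m-1-a+r+1 = r-a+m from by omega]
        ring
      rw [Finset.sum_congr rfl h2,
        Finset.sum_range_reflect (fun i => Rn r (i+1) (n+1) - Rn r i (n+1)) m,
        Finset.sum_range_sub (fun i => Rn r i (n+1)) m]
      rw [Rn_zero, sub_zero]

end GPW

namespace GPW
open Finset

lemma hockey (c K R : ℕ) (hK : K ≤ c) :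
    (c+1).choose (K+1) + ∑ i ∈ range R, (c+1+i).choose K = (c+1+R).choose (K+1) := by
  have l1 : ∑ m ∈ Ico K (c+1), m.choose K = (c+1).choose (K+1) := by
    rw [Finset.Ico_add_one_right_eq_Icc, Nat.sum_Icc_choose]
  have l2 : ∑ m ∈ Ico K (c+1+R), m.choose K = (c+1+R).choose (K+1) := by
    rw [show c+1+R = (c+R)+1 from by omega, Finset.Ico_add_one_right_eq_Icc, Nat.sum_Icc_choose]
  have l3 : ∑ m ∈ Ico (c+1) (c+1+R), m.choose K = ∑ i ∈ range R, (c+1+i).choose K := by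
    rw [Finset.sum_Ico_eq_sum_range]
    simp
  have l4 : ∑ m ∈ Ico K (c+1), m.choose K + ∑ m ∈ Ico (c+1) (c+1+R), m.choose K
      = ∑ m ∈ Ico K (c+1+R), m.choose K :=
    Finset.sum_Ico_consecutive _ (by omega) (by omega)
  omega

lemma smc (N K : ℕ) : (N+1) * N.choose K = (N+1).choose (K+1) * (K+1) := by
  simpa [Nat.succ_eq_add_one] using Nat.add_one_mul_choose_eq N K

lemma key (r k : ℕ) (hr : 1 ≤ r) :
    ((k:ℤ)+1) * ∑ a ∈ range r, Rn r (r-a) k = r * (((r+1)*k).choose k : ℤ) := by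
  cases k with
  | zero => simp [show ∀ m, Rn r m 0 = 1 from fun m => rfl]
  | succ k' =>
    have hle1 : k'+1 ≤ (r+1)*(k'+1) := Nat.le_mul_of_pos_left _ (by omega)
    have hle2 : k' ≤ (r+1)*(k'+1)-1 := by omega
    have e1 : ∀ a ∈ range r, Rn r (r-a) (k'+1)
        = ((((r+1)*(k'+1)+1+(r-1-a)).choose (k'+1) : ℕ) : ℤ)
          - ((r:ℤ)+1) * ((((r+1)*(k'+1)+(r-1-a)).choose k' : ℕ) : ℤ) := by
      intro a ha
      rw [mem_range] at ha
      simp only [Rn]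
      have hmul : (r+1)*(k'+1) = (r+1)*k'+r+1 := by ring
      have i1 : (r+1)*(k'+1)+1+(r-1-a) = (r+1)*(k'+1)+(r-a) := by omega
      have i2 : (r+1)*(k'+1)+(r-1-a) = (r+1)*k'+r+(r-a) := by omega
      rw [i1, i2]
    rw [Finset.sum_congr rfl e1, Finset.sum_sub_distrib]
    rw [Finset.sum_range_reflect (fun i => ((((r+1)*(k'+1)+1+i).choose (k'+1) : ℕ) : ℤ)) r]
    rw [← Finset.mul_sum,
      Finset.sum_range_reflect (fun i => ((((r+1)*(k'+1)+i).choose k' : ℕ) : ℤ)) r]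
    have hH1 := hockey ((r+1)*(k'+1)) (k'+1) r (by omega)
    have hH2 := hockey ((r+1)*(k'+1)-1) k' r (by omega)
    rw [show (r+1)*(k'+1)-1+1 = (r+1)*(k'+1) from by omega] at hH2
    have I1 := smc ((r+1)*(k'+1)+r) (k'+1)
    have I2 := smc ((r+1)*(k'+1)) (k'+1)
    -- cast hockey and smc facts to ℤ
    have hH1' : ((((r+1)*(k'+1)+1).choose (k'+2) : ℕ) : ℤ)
        + ∑ i ∈ range r, ((((r+1)*(k'+1)+1+i).choose (k'+1) : ℕ) : ℤ)
        = ((((r+1)*(k'+1)+1+r).choose (k'+2) : ℕ) : ℤ) := by exact_mod_cast hH1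
    have hH2' : ((((r+1)*(k'+1)).choose (k'+1) : ℕ) : ℤ)
        + ∑ i ∈ range r, ((((r+1)*(k'+1)+i).choose k' : ℕ) : ℤ)
        = ((((r+1)*(k'+1)+r).choose (k'+1) : ℕ) : ℤ) := by exact_mod_cast hH2
    have I1' : (((r+1)*(k'+1)+r+1 : ℕ) : ℤ) * ((((r+1)*(k'+1)+r).choose (k'+1) : ℕ) : ℤ)
        = ((((r+1)*(k'+1)+r+1).choose (k'+2) : ℕ) : ℤ) * ((k':ℤ)+2) := by exact_mod_cast I1
    have I2' : (((r+1)*(k'+1)+1 : ℕ) : ℤ) * ((((r+1)*(k'+1)).choose (k'+1) : ℕ) : ℤ)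
        = ((((r+1)*(k'+1)+1).choose (k'+2) : ℕ) : ℤ) * ((k':ℤ)+2) := by exact_mod_cast I2
    rw [show (r+1)*(k'+1)+1+r = (r+1)*(k'+1)+r+1 from by omega] at hH1'
    push_cast at hH1' hH2' I1' I2' ⊢
    linear_combination ((k':ℤ)+2) * hH1' - ((k':ℤ)+2) * ((r:ℤ)+1) * hH2' - I1' + I2'

end GPW

/-- Gu–Prodinger–Wagner: the number of `r`-plane trees on `k + 1` vertices equals
`(r / (k + 1)) · binom((r+1)k, k)`. -/
theorem stmt7 (r k : ℕ) (hr : 1 ≤ r) :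
    (k + 1) * rPlaneCount r k = r * Nat.choose ((r + 1) * k) k := by
  have h := GPW.rPlaneCount_eq r k
  apply @Nat.cast_injective ℤ _ _
  push_cast [h]
  rw [Finset.sum_congr rfl (fun a (ha : a ∈ Finset.range r) =>
    GPW.Fnum_eq_Rn r k (r - a) (by omega))]
  exact GPW.key r k hr
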